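/- Let n ≥ 1 and fix an indeterminate q. Then for all integers j ≥ 0, all b ∈ B and all μ = (μ_0,…,μ_n) ∈ ℤ^{n+1}, the unrestricted one-dimensional sum of the level-1 perfect crystal of type A_n^{(1)} satisfies the closed formula g_j(b,μ) = q^{(1/2)·Σ_{k∈B} μ_k(μ_k−1) + Σ_{k∈B} H(b,k)·μ_k} · [j; μ]_q. -/

import Mathlib

open Finset

noncomputable section

/-- The indeterminate `q`, living in the field of rational functions `ℚ(q)`. -/
def q : RatFunc ℚ := RatFunc.X

/-- The energy function of the level-1 perfect crystal `B = {0,…,n}` of type `A_n^{(1)}`: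
`H(b,b') = 1` if `b ≥ b'` and `0` if `b < b'`. -/
def H (n : ℕ) (b b' : Fin (n + 1)) : ℤ := if b' ≤ b then 1 else 0

/-- The unrestricted one-dimensional sum `g_j(b,μ)`: the sum of
`q^{Σ_{i=1}^j i·H(b_{i+1},b_i)}` over all sequences `(b_1,…,b_j) ∈ B^j` (encoded as
`p : Fin (j+1) → B` with `p (i-1) = b_i` and `p j = b_{j+1} = b`) such that for every
`k ∈ B` the number of `i ∈ {1,…,j}` with `b_i = k` equals `μ_k`. -/
def g (n j : ℕ) (b : Fin (n + 1)) (μ : Fin (n + 1) → ℤ) : RatFunc ℚ :=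
  ∑ p ∈ Finset.univ.filter (fun p : Fin (j + 1) → Fin (n + 1) =>
      p (Fin.last j) = b ∧
      ∀ k, ((Finset.univ.filter (fun i : Fin j => p i.castSucc = k)).card : ℤ) = μ k),
    q ^ (∑ i : Fin j, ((i : ℤ) + 1) * H n (p i.succ) (p i.castSucc))

/-- `(q)_m = Π_{i=1}^m (1 - q^i)`. -/
def qfac (m : ℕ) : RatFunc ℚ := ∏ i ∈ Finset.range m, (1 - q ^ (i + 1))

/-- The Gaussian multinomial `[j; μ]_q`, defined to be `(q)_j / Π_k (q)_{μ_k}` when all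
`μ_k ≥ 0` and `Σ_k μ_k = j`, and `0` otherwise. -/
def qmult (n j : ℕ) (μ : Fin (n + 1) → ℤ) : RatFunc ℚ :=
  if (∀ k, 0 ≤ μ k) ∧ (∑ k, μ k) = (j : ℤ) then qfac j / ∏ k, qfac (μ k).toNat else 0

lemma q_ne_zero : q ≠ 0 := RatFunc.X_ne_zero

lemma q_pow_ne_one (m : ℕ) (hm : m ≠ 0) : q ^ m ≠ 1 := by
  intro h
  have : (algebraMap (Polynomial ℚ) (RatFunc ℚ)) (Polynomial.X ^ m) =
      (algebraMap (Polynomial ℚ) (RatFunc ℚ)) 1 := by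
    simpa [q, RatFunc.algebraMap_X] using h
  have h2 := RatFunc.algebraMap_injective ℚ this
  have := congrArg Polynomial.natDegree h2
  simp [Polynomial.natDegree_X_pow] at this
  exact hm this

lemma one_sub_q_pow_ne_zero (m : ℕ) (hm : m ≠ 0) : 1 - q ^ m ≠ 0 := by
  intro h
  have : (1 : RatFunc ℚ) = q ^ m := sub_eq_zero.mp h
  exact q_pow_ne_one m hm this.symm

lemma qfac_ne_zero (m : ℕ) : qfac m ≠ 0 :=
  Finset.prod_ne_zero_iff.mpr fun i _ => one_sub_q_pow_ne_zero (i+1) (Nat.succ_ne_zero i)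

lemma qfac_succ (m : ℕ) : qfac (m + 1) = qfac m * (1 - q ^ (m + 1)) := by
  rw [qfac, Finset.prod_range_succ]; rfl

lemma telescope (N b : ℕ) (hb : b < N) (f : ℕ → RatFunc ℚ) (v : RatFunc ℚ) :
    ∑ c ∈ range N, (if c ≤ b then v else 1) * (f c - f (c + 1)) =
      v * (f 0 - f (b + 1)) + (f (b + 1) - f N) := by
  have key : ∀ c, (if c ≤ b then v else 1) * (f c - f (c + 1)) =
      (f c - f (c + 1)) + (if c ≤ b then (v - 1) * (f c - f (c+1)) else 0) := by
    intro c; split <;> ring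
  rw [Finset.sum_congr rfl fun c _ => key c, Finset.sum_add_distrib,
    Finset.sum_range_sub' f, ← Finset.sum_filter]
  have hfil : (range N).filter (· ≤ b) = range (b + 1) := by
    ext c; simp [Nat.lt_succ_iff]; intro h; omega
  rw [hfil, ← Finset.mul_sum, Finset.sum_range_sub' f]
  ring

lemma count_split (n j : ℕ) (p' : Fin (j+1) → Fin (n+1)) (k : Fin (n+1)) :
    (Finset.univ.filter (fun i : Fin (j+1) => p' i = k)).card
      = (Finset.univ.filter (fun i : Fin j => p' i.castSucc = k)).card
        + (if p' (Fin.last j) = k then 1 else 0) := by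
  rw [Finset.card_filter, Finset.card_filter, Fin.sum_univ_castSucc]

lemma g_succ (n j : ℕ) (b : Fin (n+1)) (μ : Fin (n+1) → ℤ) :
    g n (j+1) b μ = ∑ c, q ^ (((j:ℤ)+1) * H n b c) *
      g n j c (fun k => μ k - if k = c then 1 else 0) := by
  rw [g, Finset.sum_filter]
  rw [← Fintype.sum_equiv (Fin.snocEquiv (fun _ => Fin (n+1))) _
      (fun a : Fin (j+2) → Fin (n+1) => if a (Fin.last (j + 1)) = b ∧
        ∀ k, ((Finset.univ.filter (fun i : Fin (j+1) => a i.castSucc = k)).card : ℤ) = μ k then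
          q ^ ∑ i : Fin (j+1), ((i : ℤ) + 1) * H n (a i.succ) (a i.castSucc) else 0) (fun y => rfl)]
  rw [Fintype.sum_prod_type]
  simp only [Fin.snocEquiv, Equiv.coe_fn_mk, Fin.snoc_last, Fin.snoc_castSucc, ite_and]
  rw [Finset.sum_comm]
  have step1 : ∀ p' : Fin (j+1) → Fin (n+1),
      (∑ x : Fin (n+1), if x = b then
        (if (∀ k, ((Finset.univ.filter (fun i : Fin (j+1) => p' i = k)).card : ℤ) = μ k) then
          q ^ (∑ i : Fin (j+1), ((i : ℤ) + 1) * H n ((Fin.snoc p' x : Fin (j+2) → Fin (n+1)) i.succ) (p' i)) else 0) else 0)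
      = (if (∀ k, ((Finset.univ.filter (fun i : Fin (j+1) => p' i = k)).card : ℤ) = μ k) then
          q ^ (∑ i : Fin (j+1), ((i : ℤ) + 1) * H n ((Fin.snoc p' b : Fin (j+2) → Fin (n+1)) i.succ) (p' i)) else 0) := by
    intro p'
    rw [Finset.sum_ite_eq' Finset.univ b]
    simp
  rw [Finset.sum_congr rfl fun p' _ => step1 p']
  have step2 : ∀ p' : Fin (j+1) → Fin (n+1),
      (∑ i : Fin (j+1), ((i : ℤ) + 1) * H n ((Fin.snoc p' b : Fin (j+2) → Fin (n+1)) i.succ) (p' i))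
      = (∑ i : Fin j, ((i : ℤ) + 1) * H n (p' i.succ) (p' i.castSucc))
        + ((j : ℤ) + 1) * H n b (p' (Fin.last j)) := by
    intro p'
    rw [Fin.sum_univ_castSucc]
    simp [Fin.succ_castSucc, Fin.snoc_castSucc, Fin.succ_last, Fin.snoc_last, - Fin.castSucc_succ]
  simp only [step2]
  have step3 : ∀ x : Fin (j+1) → Fin (n+1),
      (if (∀ k, ((Finset.univ.filter (fun i : Fin (j+1) => x i = k)).card : ℤ) = μ k) then
        q ^ ((∑ i : Fin j, ((i : ℤ) + 1) * H n (x i.succ) (x i.castSucc))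
          + ((j : ℤ) + 1) * H n b (x (Fin.last j))) else 0)
      = ∑ c : Fin (n+1), if x (Fin.last j) = c then
          (if (∀ k, ((Finset.univ.filter (fun i : Fin (j+1) => x i = k)).card : ℤ) = μ k) then
            q ^ ((∑ i : Fin j, ((i : ℤ) + 1) * H n (x i.succ) (x i.castSucc))
              + ((j : ℤ) + 1) * H n b (x (Fin.last j))) else 0) else 0 := by
    intro x
    rw [Finset.sum_ite_eq]
    simp
  rw [Finset.sum_congr rfl fun x _ => step3 x, Finset.sum_comm]
  refine Finset.sum_congr rfl fun c _ => ?_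
  rw [g, Finset.sum_filter, Finset.mul_sum]
  refine Finset.sum_congr rfl fun x _ => ?_
  by_cases h1 : x (Fin.last j) = c
  · have key : ∀ k, ((Finset.univ.filter (fun i : Fin (j+1) => x i = k)).card : ℤ)
        = ((Finset.univ.filter (fun i : Fin j => x i.castSucc = k)).card : ℤ)
          + (if k = c then 1 else 0) := by
      intro k
      rw [count_split n j x k]
      push_cast
      rw [h1]
      by_cases hkc : k = c
      · simp [hkc]
      · simp [hkc, (Ne.symm hkc : ¬ c = k)]
    have hC : (∀ k, ((Finset.univ.filter (fun i : Fin (j+1) => x i = k)).card : ℤ) = μ k) ↔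
        (∀ k, ((Finset.univ.filter (fun i : Fin j => x i.castSucc = k)).card : ℤ)
          = μ k - if k = c then 1 else 0) := by
      constructor <;> intro h k <;> have h2 := h k
      · rw [key k] at h2; omega
      · rw [key k]; omega
    simp only [h1, hC, if_true, true_and]
    by_cases h2 : (∀ k, ((Finset.univ.filter (fun i : Fin j => x i.castSucc = k)).card : ℤ)
          = μ k - if k = c then 1 else 0)
    · rw [if_pos h2, if_pos h2, zpow_add₀ q_ne_zero]
      ring
    · simp [h2]
  · simp [h1]

lemma g_zero (n : ℕ) (b : Fin (n+1)) (μ : Fin (n+1) → ℤ) :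
    g n 0 b μ = if (∀ k, μ k = 0) then 1 else 0 := by
  rw [g]
  by_cases h : ∀ k, μ k = 0
  · rw [if_pos h]
    have hfil : (Finset.univ.filter (fun p : Fin 1 → Fin (n + 1) =>
        p (Fin.last 0) = b ∧
        ∀ k, ((Finset.univ.filter (fun i : Fin 0 => p i.castSucc = k)).card : ℤ) = μ k))
        = {fun _ => b} := by
      ext p
      simp only [Finset.mem_filter, Finset.mem_univ, true_and, Finset.mem_singleton]
      constructor
      · rintro ⟨h1, -⟩
        funext i
        rw [Subsingleton.elim i (Fin.last 0)]
        exact h1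
      · rintro rfl
        exact ⟨rfl, fun k => by simp [h k]⟩
    rw [hfil, Finset.sum_singleton]
    simp
  · rw [if_neg h]
    have hfil : (Finset.univ.filter (fun p : Fin 1 → Fin (n + 1) =>
        p (Fin.last 0) = b ∧
        ∀ k, ((Finset.univ.filter (fun i : Fin 0 => p i.castSucc = k)).card : ℤ) = μ k))
        = ∅ := by
      ext p
      simp only [Finset.mem_filter, Finset.mem_univ, true_and, Finset.notMem_empty, iff_false]
      rintro ⟨-, h2⟩
      exact h fun k => by simpa using (h2 k).symm
    rw [hfil, Finset.sum_empty]

lemma g_bad (n j : ℕ) (b : Fin (n+1)) (μ : Fin (n+1) → ℤ)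
    (h : ¬((∀ k, 0 ≤ μ k) ∧ (∑ k, μ k) = (j : ℤ))) : g n j b μ = 0 := by
  rw [g]
  have hfil : (Finset.univ.filter (fun p : Fin (j + 1) → Fin (n + 1) =>
      p (Fin.last j) = b ∧
      ∀ k, ((Finset.univ.filter (fun i : Fin j => p i.castSucc = k)).card : ℤ) = μ k)) = ∅ := by
    ext p
    simp only [Finset.mem_filter, Finset.mem_univ, true_and, Finset.notMem_empty, iff_false]
    rintro ⟨-, h2⟩
    refine h ⟨fun k => (h2 k) ▸ Int.natCast_nonneg _, ?_⟩
    have hcard : (Finset.univ : Finset (Fin j)).card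
        = ∑ k : Fin (n+1), (Finset.univ.filter (fun i : Fin j => p i.castSucc = k)).card :=
      Finset.card_eq_sum_card_fiberwise (fun i _ => Finset.mem_univ _)
    calc (∑ k, μ k) = ∑ k : Fin (n+1),
          ((Finset.univ.filter (fun i : Fin j => p i.castSucc = k)).card : ℤ) :=
        Finset.sum_congr rfl fun k _ => (h2 k).symm
      _ = ((Finset.univ : Finset (Fin j)).card : ℤ) := by rw [hcard]; push_cast; ring
      _ = (j : ℤ) := by simp
  rw [hfil, Finset.sum_empty]

lemma sum_sub_indicator (n : ℕ) (μ : Fin (n+1) → ℤ) (c : Fin (n+1)) :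
    (∑ k, (μ k - if k = c then 1 else 0)) = (∑ k, μ k) - 1 := by
  rw [Finset.sum_sub_distrib, Finset.sum_ite_eq' Finset.univ c]
  simp

lemma key_sum (n j : ℕ) (b : Fin (n+1)) (μ : Fin (n+1) → ℤ)
    (h1 : (∑ k, μ k) = (j : ℤ) + 1) :
    ∑ c : Fin (n+1), q ^ (((j:ℤ)+1) * H n b c + ((∑ k, H n c k * μ k) - μ c)) * (1 - q ^ (μ c))
      = q ^ (∑ k, H n b k * μ k) * (1 - q ^ ((j:ℤ)+1)) := by
  set μ' : ℕ → ℤ := fun m => if hm : m < n + 1 then μ ⟨m, hm⟩ else 0 with hμ'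
  set P : ℕ → ℤ := fun m => ∑ k ∈ range m, μ' k with hP
  have hμ'eq : ∀ c : Fin (n+1), μ' (c : ℕ) = μ c := by
    intro c; simp [hμ', c.isLt]; intro h; have := c.isLt; omega
  have hB : ∀ c : Fin (n+1), (∑ k, H n c k * μ k) = P ((c : ℕ) + 1) := by
    intro c
    have hpt : ∀ k : Fin (n+1), H n c k * μ k
        = (fun m => if m ≤ (c : ℕ) then μ' m else 0) (k : ℕ) := by
      intro k
      simp only [H, Fin.le_def, hμ'eq]
      split <;> simp_all
    rw [Finset.sum_congr rfl fun k _ => hpt k,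
      Fin.sum_univ_eq_sum_range (fun m => if m ≤ (c : ℕ) then μ' m else 0) (n+1),
      ← Finset.sum_filter]
    have hfil : (range (n+1)).filter (· ≤ (c : ℕ)) = range ((c : ℕ) + 1) := by
      ext m; simp [Nat.lt_succ_iff]; intro h; omega
    rw [hfil]
  have hPc : ∀ c : Fin (n+1), P ((c : ℕ) + 1) = P (c : ℕ) + μ c := by
    intro c
    show (∑ k ∈ range ((c : ℕ) + 1), μ' k) = (∑ k ∈ range (c : ℕ), μ' k) + μ c
    rw [Finset.sum_range_succ, hμ'eq]
  have hPn : P (n + 1) = (j : ℤ) + 1 := by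
    show (∑ k ∈ range (n + 1), μ' k) = (j : ℤ) + 1
    rw [← h1, ← Fin.sum_univ_eq_sum_range]
    exact Finset.sum_congr rfl fun k _ => hμ'eq k
  have hterm : ∀ c : Fin (n+1),
      q ^ (((j:ℤ)+1) * H n b c + ((∑ k, H n c k * μ k) - μ c)) * (1 - q ^ (μ c))
      = (fun m => (if m ≤ (b : ℕ) then q ^ ((j:ℤ)+1) else 1)
          * (q ^ (P m) - q ^ (P (m+1)))) (c : ℕ) := by
    intro c
    show _ = (if (c : ℕ) ≤ (b : ℕ) then q ^ ((j:ℤ)+1) else 1)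
          * (q ^ (P (c : ℕ)) - q ^ (P ((c : ℕ) + 1)))
    rw [hB c, hPc c, add_sub_cancel_right]
    simp only [H, Fin.le_def]
    split
    · rw [mul_one]
      simp only [zpow_add₀ q_ne_zero]
      ring
    · rw [mul_zero, zero_add, one_mul]
      simp only [zpow_add₀ q_ne_zero]
      ring
  rw [Finset.sum_congr rfl fun c _ => hterm c,
    Fin.sum_univ_eq_sum_range (fun m => (if m ≤ (b : ℕ) then q ^ ((j:ℤ)+1) else 1)
          * (q ^ (P m) - q ^ (P (m+1)))) (n+1),
    telescope (n+1) b b.isLt, hB b, hPn]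
  have hP0 : P 0 = 0 := by simp [hP]
  rw [hP0, zpow_zero]
  ring

lemma even_S (n : ℕ) (μ : Fin (n+1) → ℤ) : (2 : ℤ) ∣ ∑ k, μ k * (μ k - 1) := by
  refine Finset.dvd_sum fun k _ => ?_
  have : Even ((μ k - 1) * (μ k - 1 + 1)) := Int.even_mul_succ_self _
  have h2 : μ k * (μ k - 1) = (μ k - 1) * (μ k - 1 + 1) := by ring
  rw [h2]
  exact this.two_dvd

/-- the closed `q`-multinomial formula for the unrestricted one-dimensional
sum of the level-1 perfect crystal of type `A_n^{(1)}`. -/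
theorem statement0 (n : ℕ) (hn : 1 ≤ n) (j : ℕ) (b : Fin (n + 1)) (μ : Fin (n + 1) → ℤ) :
    g n j b μ =
      q ^ ((∑ k, μ k * (μ k - 1)) / 2 + ∑ k, H n b k * μ k) * qmult n j μ := by
  induction j generalizing b μ with
  | zero =>
    rw [g_zero]
    by_cases h : ∀ k, μ k = 0
    · rw [if_pos h]
      have h2 : qmult n 0 μ = 1 := by
        rw [qmult, if_pos ⟨fun k => (h k).ge, by simp [h]⟩]
        simp [qfac, h]
      rw [h2]
      have h3 : ((∑ k, μ k * (μ k - 1)) / 2 + ∑ k, H n b k * μ k) = 0 := by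
        simp [h]
      rw [h3, zpow_zero, mul_one]
    · rw [if_neg h, qmult, if_neg, mul_zero]
      rintro ⟨h0, hs⟩
      refine h fun k => ?_
      have := (Finset.sum_eq_zero_iff_of_nonneg (fun k _ => h0 k)).mp (by simpa using hs)
      exact this k (Finset.mem_univ k)
  | succ j IH =>
    by_cases h : (∀ k, 0 ≤ μ k) ∧ (∑ k, μ k) = ((j : ℤ) + 1)
    · obtain ⟨h0, hsum⟩ := h
      rw [g_succ]
      have hterm : ∀ c : Fin (n+1),
          q ^ (((j:ℤ)+1) * H n b c) * g n j c (fun k => μ k - if k = c then 1 else 0)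
          = (q ^ ((∑ k, μ k * (μ k - 1)) / 2) * (qfac j / ∏ k, qfac (μ k).toNat)) *
            (q ^ (((j:ℤ)+1) * H n b c + ((∑ k, H n c k * μ k) - μ c)) * (1 - q ^ (μ c))) := by
        intro c
        set ν : Fin (n+1) → ℤ := fun k => μ k - if k = c then 1 else 0 with hν
        by_cases hc : μ c = 0
        · -- term vanishes on both sides
          have hgz : g n j c ν = 0 := by
            apply g_bad
            rintro ⟨hb0, -⟩
            have := hb0 c
            simp [hν, hc] at this
          rw [hgz, mul_zero, hc, zpow_zero, sub_self, mul_zero, mul_zero]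
        · have hc1 : 1 ≤ μ c := lt_of_le_of_ne (h0 c) (Ne.symm hc)
          have hν0 : ∀ k, 0 ≤ ν k := by
            intro k
            by_cases hkc : k = c
            · subst hkc; simp [hν]; omega
            · simp [hν, hkc]; exact h0 k
          have hνsum : (∑ k, ν k) = (j : ℤ) := by
            rw [hν, sum_sub_indicator, hsum]; ring
          -- S' = S - 2 (μ c - 1)
          obtain ⟨s, hs⟩ := even_S n μ
          have hS' : (∑ k, ν k * (ν k - 1)) = (∑ k, μ k * (μ k - 1)) - 2 * (μ c - 1) := by
            have hpt : ∀ k : Fin (n+1), ν k * (ν k - 1)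
                = μ k * (μ k - 1) - (if k = c then 2 * (μ c - 1) else 0) := by
              intro k
              by_cases hkc : k = c
              · subst hkc; simp [hν]; ring
              · simp [hν, hkc]
            rw [Finset.sum_congr rfl fun k _ => hpt k, Finset.sum_sub_distrib,
              Finset.sum_ite_eq' Finset.univ c]
            simp
          have hdiv : (∑ k, ν k * (ν k - 1)) / 2 = (∑ k, μ k * (μ k - 1)) / 2 - (μ c - 1) := by
            rw [hS', hs]
            have : 2 * s - 2 * (μ c - 1) = 2 * (s - (μ c - 1)) := by ring
            rw [this, Int.mul_ediv_cancel_left _ two_ne_zero, Int.mul_ediv_cancel_left _ two_ne_zero]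
          -- B' = B_c - 1
          have hB' : (∑ k, H n c k * ν k) = (∑ k, H n c k * μ k) - 1 := by
            have hpt : ∀ k : Fin (n+1), H n c k * ν k
                = H n c k * μ k - (if k = c then 1 else 0) := by
              intro k
              by_cases hkc : k = c
              · subst hkc
                simp [hν, H]
              · simp [hν, hkc]
            rw [Finset.sum_congr rfl fun k _ => hpt k, Finset.sum_sub_distrib,
              Finset.sum_ite_eq' Finset.univ c]
            simp
          -- qmult of ν
          set mc : ℕ := (μ c).toNat with hmc
          have hmc1 : 1 ≤ mc := by omega
          have hmceq : ((mc : ℤ)) = μ c := by omega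
          have hprod : (∏ k, qfac (ν k).toNat) * (1 - q ^ mc) = ∏ k, qfac (μ k).toNat := by
            rw [← Finset.prod_erase_mul Finset.univ _ (Finset.mem_univ c),
              ← Finset.prod_erase_mul Finset.univ _ (Finset.mem_univ c)]
            have hνc : ν c = μ c - 1 := by simp [hν]
            have hν_toNat : (ν c).toNat = mc - 1 := by rw [hνc]; omega
            have hcong : ∏ k ∈ Finset.univ.erase c, qfac (ν k).toNat
                = ∏ k ∈ Finset.univ.erase c, qfac (μ k).toNat := by
              refine Finset.prod_congr rfl fun k hk => ?_
              have : k ≠ c := (Finset.mem_erase.mp hk).1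
              simp [hν, this]
            rw [hcong, hν_toNat, mul_assoc]
            congr 1
            have hrw : qfac mc = qfac (mc - 1) * (1 - q ^ mc) := by
              conv_lhs => rw [show mc = (mc - 1) + 1 by omega]
              rw [qfac_succ, show (mc - 1) + 1 = mc by omega]
            rw [← hmc, hrw]
          have hqν : qmult n j ν = qfac j * (1 - q ^ mc) / ∏ k, qfac (μ k).toNat := by
            rw [qmult, if_pos ⟨hν0, hνsum⟩, ← hprod]
            rw [div_eq_div_iff (Finset.prod_ne_zero_iff.mpr fun k _ => qfac_ne_zero _)
              (mul_ne_zero (Finset.prod_ne_zero_iff.mpr fun k _ => qfac_ne_zero _)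
                (one_sub_q_pow_ne_zero mc (by omega)))]
            ring
          rw [IH, hqν, hdiv, hB']
          have hzc : (1 : RatFunc ℚ) - q ^ mc = 1 - q ^ (μ c) := by
            rw [← hmceq, zpow_natCast]
          rw [hzc]
          have hexp : ((∑ k, μ k * (μ k - 1)) / 2 - (μ c - 1)) + ((∑ k, H n c k * μ k) - 1)
              = (∑ k, μ k * (μ k - 1)) / 2 + ((∑ k, H n c k * μ k) - μ c) := by ring
          rw [hexp]
          simp only [zpow_add₀ q_ne_zero, zpow_sub₀ q_ne_zero]
          ring
      rw [Finset.sum_congr rfl fun c _ => hterm c, ← Finset.mul_sum, key_sum n j b μ hsum]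
      have hq : qmult n (j+1) μ = qfac j * (1 - q ^ (j+1)) / ∏ k, qfac (μ k).toNat := by
        rw [qmult, if_pos ⟨h0, by exact_mod_cast hsum⟩, qfac_succ]
      rw [hq]
      have hz : (1 : RatFunc ℚ) - q ^ ((j:ℤ)+1) = 1 - q ^ (j+1) := by
        rw [← zpow_natCast q (j+1)]
        push_cast
        ring_nf
      rw [hz]
      simp only [zpow_add₀ q_ne_zero]
      ring
    · rw [g_succ]
      have hq0 : qmult n (j+1) μ = 0 := by
        rw [qmult, if_neg]
        intro h2
        exact h ⟨h2.1, by exact_mod_cast h2.2⟩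
      rw [hq0, mul_zero]
      refine Finset.sum_eq_zero fun c _ => ?_
      have : g n j c (fun k => μ k - if k = c then 1 else 0) = 0 := by
        apply g_bad
        rintro ⟨hb0, hbs⟩
        refine h ⟨fun k => ?_, ?_⟩
        · by_cases hkc : k = c
          · subst hkc
            have := hb0 k
            simp at this
            omega
          · have := hb0 k
            simpa [hkc] using this
        · have := hbs
          rw [sum_sub_indicator] at this
          omega
      rw [this, mul_zero]

end
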